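/- Adding the (l,S_j)-inequalities to the standard LP relaxation gives a relaxation at least as strong as the facility location LP relaxation on the projected variables: if (x, y) with 0 ≤ y ≤ 1, x ≥ 0 satisfies all (l,S_j)-inequalities Σ_j ( Σ_{u∈L∖S_j} x^{ij}_u + Σ_{u∈S_j} y^j_u d^i_{ul} ) ≥ d^i_{1l} for every item i, every l, and every choice of S_j ⊆ {1,...,l}, and additionally Σ_j Σ_t x^{ij}_t = d^i_{1,NT} for each i, then there exists X ≥ 0 with Σ_{k≥t} X^{ij}_{tk} = x^{ij}_t, Σ_j Σ_{t≤k} X^{ij}_{tk} = d^i_k, and X^{ij}_{tk} ≤ d^i_k y^j_t (i.e., (x,y) lies in the projection of the facility location LP relaxation). -/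

import Mathlib

open Finset

namespace LSJAux

variable {P K : Type*} [Fintype P] [Fintype K] [DecidableEq P] [DecidableEq K]

/-- Residual relation: forward arcs source→sink with residual capacity,
backward arcs sink→source with positive flow. -/
def rel (c X : P → K → ℝ) : P ⊕ K → P ⊕ K → Prop
  | Sum.inl p, Sum.inr k => X p k < c p k
  | Sum.inr k, Sum.inl p => 0 < X p k
  | _, _ => False

def srcAdj : P ⊕ K → P → ℝ → ℝ
  | Sum.inl q, p, ε => if p = q then ε else 0
  | Sum.inr _, _, _ => 0

def snkAdj : P ⊕ K → K → ℝ → ℝ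
  | Sum.inl _, _, _ => 0
  | Sum.inr j, k, ε => if k = j then ε else 0

lemma aug (c X : P → K → ℝ) (hX0 : ∀ p k, 0 ≤ X p k) (hXc : ∀ p k, X p k ≤ c p k) (k0 : K)
    (n : P ⊕ K) (hn : Relation.ReflTransGen (rel c X) n (Sum.inr k0)) :
    ∃ δ : ℝ, 0 < δ ∧ ∃ C : ℝ, 0 ≤ C ∧ ∀ ε : ℝ, 0 < ε → ε ≤ δ →
      ∃ X' : P → K → ℝ,
        (∀ p k, 0 ≤ X' p k ∧ X' p k ≤ c p k ∧ |X' p k - X p k| ≤ C * ε) ∧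
        (∀ p, ∑ k, X' p k = (∑ k, X p k) + srcAdj n p ε) ∧
        (∀ k, ∑ p, X' p k = (∑ p, X p k) + (if k = k0 then ε else 0) - snkAdj n k ε) := by
  induction hn using Relation.ReflTransGen.head_induction_on with
  | refl =>
      refine ⟨1, one_pos, 0, le_refl 0, fun ε hε hε1 => ⟨X, ?_, ?_, ?_⟩⟩
      · intro p k; exact ⟨hX0 p k, hXc p k, by simp⟩
      · intro p; simp [srcAdj]
      · intro k; simp [snkAdj]
  | head h' htail ih =>
      rename_i a b
      obtain ⟨δ', hδ', C', hC', hprop⟩ := ih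
      obtain p | j := a <;> obtain p' | j' := b
      · exact absurd h' (by simp [rel])
      · -- forward arc: inl p → inr j'
        have hres : X p j' < c p j' := h'
        have hs : 0 < c p j' - X p j' := sub_pos.mpr hres
        have hC1 : (0:ℝ) < C' + 1 := by linarith
        refine ⟨min δ' ((c p j' - X p j')/(C'+1)), lt_min hδ' (by positivity), C'+1, by linarith,
          fun ε hε hεδ => ?_⟩
        obtain ⟨X'', h1, h2, h3⟩ := hprop ε hε (le_trans hεδ (min_le_left _ _))
        have hεs : (C'+1) * ε ≤ c p j' - X p j' := by
          have h5 := le_trans hεδ (min_le_right _ _)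
          calc (C'+1) * ε = ε * (C'+1) := by ring
          _ ≤ c p j' - X p j' := (le_div_iff₀ hC1).mp h5
        refine ⟨fun q k => X'' q k + if q = p ∧ k = j' then ε else 0, ?_, ?_, ?_⟩
        · intro q k
          dsimp only
          obtain ⟨ha, hb, habs⟩ := h1 q k
          have habs' := abs_le.mp habs
          by_cases hqk : q = p ∧ k = j'
          · obtain ⟨rfl, rfl⟩ := hqk
            rw [if_pos ⟨rfl, rfl⟩, abs_le]
            refine ⟨by linarith, by linarith, by constructor <;> linarith⟩
          · rw [if_neg hqk, add_zero]
            exact ⟨ha, hb, le_trans habs (by nlinarith)⟩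
        · intro q
          have hsum : ∑ k, (if q = p ∧ k = j' then ε else 0) = if q = p then ε else 0 := by
            by_cases hq : q = p <;> simp [hq]
          rw [Finset.sum_add_distrib, hsum, h2 q]
          simp only [srcAdj, add_zero]
        · intro k
          have hsum : ∑ q, (if q = p ∧ k = j' then ε else 0) = if k = j' then ε else 0 := by
            by_cases hk : k = j' <;> simp [hk]
          rw [Finset.sum_add_distrib, hsum, h3 k]
          simp only [snkAdj]
          ring
      · -- backward arc: inr j → inl p'
        have hres : 0 < X p' j := h'
        have hC1 : (0:ℝ) < C' + 1 := by linarith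
        refine ⟨min δ' (X p' j/(C'+1)), lt_min hδ' (by positivity), C'+1, by linarith,
          fun ε hε hεδ => ?_⟩
        obtain ⟨X'', h1, h2, h3⟩ := hprop ε hε (le_trans hεδ (min_le_left _ _))
        have hεs : (C'+1) * ε ≤ X p' j := by
          have h5 := le_trans hεδ (min_le_right _ _)
          calc (C'+1) * ε = ε * (C'+1) := by ring
          _ ≤ X p' j := (le_div_iff₀ hC1).mp h5
        refine ⟨fun q k => X'' q k - if q = p' ∧ k = j then ε else 0, ?_, ?_, ?_⟩
        · intro q k
          dsimp only
          obtain ⟨ha, hb, habs⟩ := h1 q k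
          have habs' := abs_le.mp habs
          by_cases hqk : q = p' ∧ k = j
          · obtain ⟨rfl, rfl⟩ := hqk
            rw [if_pos ⟨rfl, rfl⟩, abs_le]
            refine ⟨by linarith, by linarith, by constructor <;> linarith⟩
          · rw [if_neg hqk, sub_zero]
            exact ⟨ha, hb, le_trans habs (by nlinarith)⟩
        · intro q
          have hsum : ∑ k, (if q = p' ∧ k = j then ε else 0) = if q = p' then ε else 0 := by
            by_cases hq : q = p' <;> simp [hq]
          rw [Finset.sum_sub_distrib, hsum, h2 q]
          simp only [srcAdj]
          by_cases hq : q = p' <;> simp [hq]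
        · intro k
          have hsum : ∑ q, (if q = p' ∧ k = j then ε else 0) = if k = j then ε else 0 := by
            by_cases hk : k = j <;> simp [hk]
          rw [Finset.sum_sub_distrib, hsum, h3 k]
          simp only [snkAdj]
          ring
      · exact absurd h' (by simp [rel])

end LSJAux

namespace LSJAux2

open LSJAux

variable {P K : Type*} [Fintype P] [Fintype K] [DecidableEq P] [DecidableEq K]

/-- Feasibility of a capacitated transportation problem under cut conditions. -/
lemma transport (a : P → ℝ) (b : K → ℝ) (c : P → K → ℝ)
    (ha : ∀ p, 0 ≤ a p) (hb : ∀ k, 0 ≤ b k) (hc : ∀ p k, 0 ≤ c p k)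
    (htot : ∑ p, a p = ∑ k, b k)
    (hcut : ∀ (R : Finset P) (Ks : Finset K),
      ∑ k ∈ Ks, b k ≤ (∑ p ∈ R, a p) + ∑ p ∈ Rᶜ, ∑ k ∈ Ks, c p k) :
    ∃ X : P → K → ℝ, (∀ p k, 0 ≤ X p k) ∧ (∀ p k, X p k ≤ c p k) ∧
      (∀ p, ∑ k, X p k = a p) ∧ (∀ k, ∑ p, X p k = b k) := by
  classical
  set F : Set (P → K → ℝ) :=
    {X | (∀ p k, 0 ≤ X p k ∧ X p k ≤ c p k) ∧ (∀ p, ∑ k, X p k ≤ a p) ∧ (∀ k, ∑ p, X p k ≤ b k)}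
    with hFdef
  have h0F : (0 : P → K → ℝ) ∈ F := by
    refine ⟨fun p k => ⟨le_refl _, hc p k⟩, fun p => by simpa using ha p, fun k => by simpa using hb k⟩
  have hFeq : F = Set.Icc (0 : P → K → ℝ) c ∩
      ((⋂ p, {X : P → K → ℝ | ∑ k, X p k ≤ a p}) ∩ (⋂ k, {X : P → K → ℝ | ∑ p, X p k ≤ b k})) := by
    ext X
    simp only [hFdef, Set.mem_setOf_eq, Set.mem_inter_iff, Set.mem_Icc, Set.mem_iInter,
      Pi.le_def, Pi.zero_apply]
    constructor
    · rintro ⟨h1, h2, h3⟩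
      exact ⟨⟨fun p k => (h1 p k).1, fun p k => (h1 p k).2⟩, h2, h3⟩
    · rintro ⟨⟨h1, h1'⟩, h2, h3⟩
      exact ⟨fun p k => ⟨h1 p k, h1' p k⟩, h2, h3⟩
  have hclosed : IsClosed ((⋂ p, {X : P → K → ℝ | ∑ k, X p k ≤ a p}) ∩
      (⋂ k, {X : P → K → ℝ | ∑ p, X p k ≤ b k})) := by
    apply IsClosed.inter
    · exact isClosed_iInter fun p => isClosed_le
        (continuous_finset_sum _ fun k _ => (continuous_apply k).comp (continuous_apply p))
        continuous_const
    · exact isClosed_iInter fun k => isClosed_le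
        (continuous_finset_sum _ fun p _ => (continuous_apply k).comp (continuous_apply p))
        continuous_const
  have hFcompact : IsCompact F := by
    rw [hFeq]
    exact isCompact_Icc.inter_right hclosed
  have hcont : Continuous (fun X : P → K → ℝ => ∑ p, ∑ k, X p k) :=
    continuous_finset_sum _ fun p _ => continuous_finset_sum _ fun k _ =>
      (continuous_apply k).comp (continuous_apply p)
  obtain ⟨X, hXF, hmax⟩ := hFcompact.exists_isMaxOn ⟨0, h0F⟩ hcont.continuousOn
  obtain ⟨hXbd, hXrow, hXcol⟩ := hXF
  have hX0 : ∀ p k, 0 ≤ X p k := fun p k => (hXbd p k).1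
  have hXc : ∀ p k, X p k ≤ c p k := fun p k => (hXbd p k).2
  -- all column sums are exact
  have hcol : ∀ k, ∑ p, X p k = b k := by
    by_contra hcon
    push_neg at hcon
    obtain ⟨k0, hk0⟩ := hcon
    have hdef : ∑ p, X p k0 < b k0 := lt_of_le_of_ne (hXcol k0) hk0
    set R : Finset P :=
      univ.filter (fun p => Relation.ReflTransGen (rel c X) (Sum.inl p) (Sum.inr k0)) with hR
    set Ks : Finset K :=
      univ.filter (fun k => Relation.ReflTransGen (rel c X) (Sum.inr k) (Sum.inr k0)) with hKs
    have hk0Ks : k0 ∈ Ks :=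
      Finset.mem_filter.mpr ⟨mem_univ _, Relation.ReflTransGen.refl⟩
    -- reachable sources are saturated
    have hsat : ∀ p ∈ R, ∑ k, X p k = a p := by
      intro p hp
      by_contra hne
      have hslack : ∑ k, X p k < a p := lt_of_le_of_ne (hXrow p) hne
      have hreach : Relation.ReflTransGen (rel c X) (Sum.inl p) (Sum.inr k0) := by
        simpa [hR] using hp
      obtain ⟨δ, hδ, C, hC, hprop⟩ := aug c X hX0 hXc k0 _ hreach
      set ε : ℝ := min δ (min (a p - ∑ k, X p k) (b k0 - ∑ p, X p k0)) with hε
      have hεpos : 0 < ε := lt_min hδ (lt_min (by linarith) (by linarith))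
      obtain ⟨X', h1, h2, h3⟩ := hprop ε hεpos (min_le_left _ _)
      have hX'F : X' ∈ F := by
        refine ⟨fun q k => ⟨(h1 q k).1, (h1 q k).2.1⟩, ?_, ?_⟩
        · intro q
          rw [h2 q]
          by_cases hq : q = p
          · subst hq
            simp only [srcAdj, if_pos rfl, if_true, eq_self_iff_true]
            have h6 : ε ≤ a q - ∑ k, X q k := le_trans (min_le_right _ _) (min_le_left _ _)
            linarith
          · simp only [srcAdj, if_neg hq, add_zero]
            exact hXrow q
        · intro k
          rw [h3 k]
          simp only [snkAdj, sub_zero]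
          by_cases hk : k = k0
          · subst hk
            rw [if_pos rfl]
            have h6 : ε ≤ b k - ∑ p, X p k := le_trans (min_le_right _ _) (min_le_right _ _)
            linarith
          · rw [if_neg hk, add_zero]
            exact hXcol k
      have hgain : ∑ q, ∑ k, X' q k = (∑ q, ∑ k, X q k) + ε := by
        have : ∀ q, ∑ k, X' q k = (∑ k, X q k) + (if q = p then ε else 0) := by
          intro q; rw [h2 q]; simp only [srcAdj]
        rw [Finset.sum_congr rfl fun q _ => this q, Finset.sum_add_distrib]
        simp
      have := hmax hX'F
      simp only [Set.mem_setOf_eq] at this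
      rw [hgain] at this
      linarith
    -- saturated capacities across the cut
    have hfull : ∀ p, p ∉ R → ∀ k ∈ Ks, X p k = c p k := by
      intro p hp k hk
      by_contra hne
      have hlt : X p k < c p k := lt_of_le_of_ne (hXc p k) hne
      have hkreach : Relation.ReflTransGen (rel c X) (Sum.inr k) (Sum.inr k0) := by
        simpa [hKs] using hk
      have : Relation.ReflTransGen (rel c X) (Sum.inl p) (Sum.inr k0) :=
        Relation.ReflTransGen.head (show rel c X (Sum.inl p) (Sum.inr k) from hlt) hkreach
      exact hp (by simp [hR, this])
    have hzero : ∀ p ∈ R, ∀ k, k ∉ Ks → X p k = 0 := by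
      intro p hp k hk
      by_contra hne
      have hlt : 0 < X p k := lt_of_le_of_ne (hX0 p k) (Ne.symm hne)
      have hpreach : Relation.ReflTransGen (rel c X) (Sum.inl p) (Sum.inr k0) := by
        simpa [hR] using hp
      have : Relation.ReflTransGen (rel c X) (Sum.inr k) (Sum.inr k0) :=
        Relation.ReflTransGen.head (show rel c X (Sum.inr k) (Sum.inl p) from hlt) hpreach
      exact hk (by simp [hKs, this])
    -- compute the flow into Ks
    have hflow : ∑ k ∈ Ks, ∑ p, X p k = (∑ p ∈ R, a p) + ∑ p ∈ Rᶜ, ∑ k ∈ Ks, c p k := by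
      rw [Finset.sum_comm]
      rw [← Finset.sum_add_sum_compl R (fun p => ∑ k ∈ Ks, X p k)]
      congr 1
      · apply Finset.sum_congr rfl
        intro p hp
        have : ∑ k ∈ Ks, X p k = ∑ k, X p k := by
          apply Finset.sum_subset (subset_univ _)
          intro k _ hk
          exact hzero p hp k hk
        rw [this, hsat p hp]
      · apply Finset.sum_congr rfl
        intro p hp
        apply Finset.sum_congr rfl
        intro k hk
        exact hfull p (by simpa using hp) k hk
    have hlt : ∑ k ∈ Ks, ∑ p, X p k < ∑ k ∈ Ks, b k := by
      apply Finset.sum_lt_sum (fun k _ => hXcol k) ⟨k0, hk0Ks, hdef⟩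
    rw [hflow] at hlt
    exact absurd (hcut R Ks) (not_le.mpr hlt)
  -- row sums are exact
  have hrowsum : ∑ p, ∑ k, X p k = ∑ p, a p := by
    rw [Finset.sum_comm, htot]
    exact Finset.sum_congr rfl fun k _ => hcol k
  have hrow : ∀ p, ∑ k, X p k = a p := by
    intro p
    exact (Finset.sum_eq_sum_iff_of_le (fun q _ => hXrow q)).mp hrowsum p (mem_univ p)
  exact ⟨X, hX0, hXc, hrow, hcol⟩

end LSJAux2

/-- If a nonnegative point `(x, y)` with `0 ≤ y ≤ 1` satisfies all
`(l,S_j)`-inequalities and purchases exactly the total demand of each item, then it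
lies in the projection of the facility location LP relaxation: there exists `X ≥ 0`
with `∑_{k≥t} X^{ij}_{tk} = x^{ij}_t`, `∑_j ∑_{t≤k} X^{ij}_{tk} = d^i_k` and
`X^{ij}_{tk} ≤ d^i_k y^j_t`. -/
theorem lSj_inequalities_imply_fl_projection
    (NI NJ NT : ℕ)
    (d : Fin NI → Fin NT → ℝ) (hd : ∀ i k, 0 ≤ d i k)
    (x : Fin NI → Fin NJ → Fin NT → ℝ) (y : Fin NJ → Fin NT → ℝ)
    (hy0 : ∀ j t, 0 ≤ y j t) (hy1 : ∀ j t, y j t ≤ 1)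
    (hx : ∀ i j t, 0 ≤ x i j t)
    (hlSj : ∀ (i : Fin NI) (l : Fin NT) (S : Fin NJ → Finset (Fin NT)),
      (∀ j, S j ⊆ Finset.Iic l) →
      (∑ k ∈ Finset.Iic l, d i k) ≤
        ∑ j, ((∑ u ∈ Finset.Iic l \ S j, x i j u) +
              ∑ u ∈ S j, y j u * ∑ k ∈ Finset.Icc u l, d i k))
    (htot : ∀ i, (∑ j, ∑ t, x i j t) = ∑ t, d i t) :
    ∃ X : Fin NI → Fin NJ → Fin NT → Fin NT → ℝ,
      (∀ i j t k, 0 ≤ X i j t k) ∧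
      (∀ i j t, (∑ k ∈ Finset.Ici t, X i j t k) = x i j t) ∧
      (∀ i k, (∑ j, ∑ t ∈ Finset.Iic k, X i j t k) = d i k) ∧
      (∀ i j t k, t ≤ k → X i j t k ≤ d i k * y j t) := by
  classical
  have key : ∀ i : Fin NI, ∃ X : (Fin NJ × Fin NT) → Fin NT → ℝ,
      (∀ p k, 0 ≤ X p k) ∧
      (∀ p k, X p k ≤ (if p.2 ≤ k then d i k * y p.1 p.2 else 0)) ∧
      (∀ p, ∑ k, X p k = x i p.1 p.2) ∧
      (∀ k, ∑ p, X p k = d i k) := by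
    intro i
    refine LSJAux2.transport (fun p : Fin NJ × Fin NT => x i p.1 p.2) (d i)
      (fun (p : Fin NJ × Fin NT) (k : Fin NT) => if p.2 ≤ k then d i k * y p.1 p.2 else 0)
      ?_ ?_ ?_ ?_ ?_
    · exact fun p => hx i p.1 p.2
    · exact hd i
    · intro p k
      split
      · exact mul_nonneg (hd i k) (hy0 p.1 p.2)
      · exact le_refl 0
    · rw [Fintype.sum_prod_type]
      exact htot i
    · -- cut conditions
      intro R Ks
      set cc : Fin NT → ℝ := fun k => ∑ p ∈ Rᶜ.filter (fun p => p.2 ≤ k), y p.1 p.2 with hccdef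
      have hccmono : ∀ k k' : Fin NT, k ≤ k' → cc k ≤ cc k' := by
        intro k k' hkk'
        apply Finset.sum_le_sum_of_subset_of_nonneg
        · intro p hp
          rw [Finset.mem_filter] at hp ⊢
          exact ⟨hp.1, le_trans hp.2 hkk'⟩
        · exact fun p _ _ => hy0 p.1 p.2
      have hsplit : ∀ k, ∑ p ∈ Rᶜ, (if p.2 ≤ k then d i k * y p.1 p.2 else 0)
          = d i k * cc k := by
        intro k
        rw [← Finset.sum_filter, hccdef, Finset.mul_sum]
      have hsw : ∑ p ∈ Rᶜ, ∑ k ∈ Ks, (if p.2 ≤ k then d i k * y p.1 p.2 else 0)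
          = ∑ k ∈ Ks, d i k * cc k := by
        rw [Finset.sum_comm]
        exact Finset.sum_congr rfl fun k _ => hsplit k
      rw [hsw]
      suffices hmain : ∑ k ∈ Ks, d i k * (1 - cc k) ≤ ∑ p ∈ R, x i p.1 p.2 by
        have hexp : ∑ k ∈ Ks, d i k * (1 - cc k)
            = (∑ k ∈ Ks, d i k) - ∑ k ∈ Ks, d i k * cc k := by
          rw [← Finset.sum_sub_distrib]
          exact Finset.sum_congr rfl fun k _ => by ring
        linarith
      set T : Finset (Fin NT) := univ.filter (fun k => cc k < 1) with hTdef
      have hTmem : ∀ k, k ∈ T ↔ cc k < 1 := by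
        intro k; rw [hTdef]; simp
      have hKsT : ∑ k ∈ Ks, d i k * (1 - cc k) ≤ ∑ k ∈ T, d i k * (1 - cc k) := by
        calc ∑ k ∈ Ks, d i k * (1 - cc k)
            ≤ ∑ k ∈ Ks.filter (fun k => k ∈ T), d i k * (1 - cc k) := by
              rw [← Finset.sum_filter_add_sum_filter_not Ks (fun k => k ∈ T)]
              have hnp : ∑ k ∈ Ks.filter (fun k => k ∉ T), d i k * (1 - cc k) ≤ 0 := by
                apply Finset.sum_nonpos
                intro k hk
                have hck : ¬ cc k < 1 := fun hc =>
                  (Finset.mem_filter.mp hk).2 ((hTmem k).mpr hc)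
                have h1 : 1 - cc k ≤ 0 := by push_neg at hck; linarith
                exact mul_nonpos_of_nonneg_of_nonpos (hd i k) h1
              linarith
          _ ≤ ∑ k ∈ T, d i k * (1 - cc k) := by
              apply Finset.sum_le_sum_of_subset_of_nonneg
              · intro k hk
                exact (Finset.mem_filter.mp hk).2
              · intro k hk _
                have hck : cc k < 1 := (hTmem k).mp hk
                exact mul_nonneg (hd i k) (by linarith)
      rcases T.eq_empty_or_nonempty with hTe | hTne
      · rw [hTe] at hKsT
        simp only [Finset.sum_empty] at hKsT
        exact le_trans hKsT (Finset.sum_nonneg fun p _ => hx i p.1 p.2)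
      · set l : Fin NT := T.max' hTne with hldef
        have hccl : cc l < 1 := (hTmem l).mp (T.max'_mem hTne)
        have hTl : T = Finset.Iic l := by
          ext k
          rw [hTmem k, Finset.mem_Iic]
          constructor
          · intro h
            exact T.le_max' k ((hTmem k).mpr h)
          · intro h
            exact lt_of_le_of_lt (hccmono k l h) hccl
        set S : Fin NJ → Finset (Fin NT) :=
          fun j => univ.filter (fun u => u ≤ l ∧ (j, u) ∉ R) with hSdef
        have hSsub : ∀ j, S j ⊆ Finset.Iic l := by
          intro j u hu
          rw [hSdef] at hu
          exact Finset.mem_Iic.mpr (Finset.mem_filter.mp hu).2.1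
        have hkey := hlSj i l S hSsub
        have hdiff : ∀ j, Finset.Iic l \ S j = univ.filter (fun u => u ≤ l ∧ (j, u) ∈ R) := by
          intro j
          ext u
          simp only [Finset.mem_sdiff, Finset.mem_Iic, hSdef, Finset.mem_filter, Finset.mem_univ,
            true_and, not_and, not_not]
          constructor
          · rintro ⟨h1, h2⟩
            exact ⟨h1, h2 h1⟩
          · rintro ⟨h1, h2⟩
            exact ⟨h1, fun _ => h2⟩
        simp only [hdiff] at hkey
        rw [Finset.sum_add_distrib] at hkey
        -- bound the x-part by the sum over R
        have hxbound : ∑ j, ∑ u ∈ univ.filter (fun u => u ≤ l ∧ (j, u) ∈ R), x i j u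
            ≤ ∑ p ∈ R, x i p.1 p.2 := by
          have hRrw : ∑ j, ∑ u ∈ univ.filter (fun u => (j, u) ∈ R), x i j u
              = ∑ p ∈ R, x i p.1 p.2 := by
            conv_rhs => rw [← Finset.filter_univ_mem R, Finset.sum_filter,
              Fintype.sum_prod_type]
            exact Finset.sum_congr rfl fun j _ => Finset.sum_filter _ _
          rw [← hRrw]
          apply Finset.sum_le_sum
          intro j _
          apply Finset.sum_le_sum_of_subset_of_nonneg
          · intro u hu
            rw [Finset.mem_filter] at hu ⊢
            exact ⟨hu.1, hu.2.2⟩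
          · exact fun u _ _ => hx i j u
        -- identify the y-part with the capacity term
        have hyeq : ∑ j, ∑ u ∈ S j, y j u * ∑ k ∈ Finset.Icc u l, d i k
            = ∑ p ∈ Rᶜ, y p.1 p.2 * ∑ k ∈ Finset.Icc p.2 l, d i k := by
          have hRc : ∑ j, ∑ u ∈ univ.filter (fun u => (j, u) ∉ R),
                y j u * ∑ k ∈ Finset.Icc u l, d i k
              = ∑ p ∈ Rᶜ, y p.1 p.2 * ∑ k ∈ Finset.Icc p.2 l, d i k := by
            conv_rhs => rw [← Finset.filter_univ_mem Rᶜ, Finset.sum_filter,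
              Fintype.sum_prod_type]
            refine Finset.sum_congr rfl fun j _ => ?_
            rw [Finset.sum_filter]
            exact Finset.sum_congr rfl fun u _ => by simp [Finset.mem_compl]
          rw [← hRc]
          refine Finset.sum_congr rfl fun j _ => ?_
          rw [hSdef]
          rw [Finset.sum_filter, Finset.sum_filter]
          refine Finset.sum_congr rfl fun u _ => ?_
          by_cases hul : u ≤ l
          · simp [hul]
          · have : Finset.Icc u l = ∅ := Finset.Icc_eq_empty hul
            simp [hul, this]
        -- identify the cc-part
        have hcceq : ∑ k ∈ Finset.Iic l, d i k * cc k
            = ∑ p ∈ Rᶜ, y p.1 p.2 * ∑ k ∈ Finset.Icc p.2 l, d i k := by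
          rw [hccdef]
          simp only
          rw [Finset.sum_congr rfl fun k (_ : k ∈ Finset.Iic l) => (Finset.mul_sum _ _ _),
            Finset.sum_congr rfl fun k (_ : k ∈ Finset.Iic l) => (Finset.sum_filter _ _)]
          rw [Finset.sum_comm]
          refine Finset.sum_congr rfl fun p _ => ?_
          rw [Finset.mul_sum]
          rw [← Finset.sum_filter]
          have : (Finset.Iic l).filter (fun k => p.2 ≤ k) = Finset.Icc p.2 l := by
            ext k
            simp only [Finset.mem_filter, Finset.mem_Iic, Finset.mem_Icc]
            tauto
          rw [this]
          exact Finset.sum_congr rfl fun k _ => mul_comm _ _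
        have hexp2 : ∑ k ∈ T, d i k * (1 - cc k)
            = (∑ k ∈ Finset.Iic l, d i k) - ∑ k ∈ Finset.Iic l, d i k * cc k := by
          rw [hTl, ← Finset.sum_sub_distrib]
          exact Finset.sum_congr rfl fun k _ => by ring
        linarith
  choose XX hXX0 hXXc hXXrow hXXcol using key
  refine ⟨fun i j t k => XX i (j, t) k, ?_, ?_, ?_, ?_⟩
  · exact fun i j t k => hXX0 i (j, t) k
  · intro i j t
    have hz : ∀ k ∈ univ, k ∉ Finset.Ici t → XX i (j, t) k = 0 := by
      intro k _ hk
      have h1 := hXXc i (j, t) k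
      rw [if_neg (by simpa using hk)] at h1
      exact le_antisymm h1 (hXX0 i (j, t) k)
    rw [Finset.sum_subset (Finset.subset_univ _) hz]
    exact hXXrow i (j, t)
  · intro i k
    have hcol := hXXcol i k
    rw [Fintype.sum_prod_type] at hcol
    rw [← hcol]
    refine Finset.sum_congr rfl fun j _ => ?_
    apply Finset.sum_subset (Finset.subset_univ _)
    intro t _ ht
    have h1 := hXXc i (j, t) k
    rw [if_neg (by simpa using ht)] at h1
    exact le_antisymm h1 (hXX0 i (j, t) k)
  · intro i j t k htk
    have h1 := hXXc i (j, t) k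
    rwa [if_pos htk] at h1
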